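/- Star composition preserves (very) well-behavedness: given an n-ary lens k and binary lenses b₁,...,bₙ where the second foot of b_i is the i-th foot of k, all over well-behaved model spaces, satisfying the junction conditions (updates propagated into A_i by b_i are k-closed, and updates propagated into A_i by k are b_i-closed), if k and all b_i are well-behaved (respectively very well-behaved), then the star-composed n-ary lens k*(b₁,...,bₙ) is well-behaved (respectively very well-behaved). -/

import Mathlib

set_option autoImplicit false

/-- A model space: a category of models and updates, equipped with a relation `K`
of sequentially compatible consecutive updates, a class `D` of mergeable (concurrently
compatible) spans, and a merge operation. -/
structure ModelSpace where
  Obj : Type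
  Hom : Obj → Obj → Type
  id : (A : Obj) → Hom A A
  comp : {A B C : Obj} → Hom A B → Hom B C → Hom A C
  id_comp : ∀ {A B : Obj} (f : Hom A B), comp (id A) f = f
  comp_id : ∀ {A B : Obj} (f : Hom A B), comp f (id B) = f
  assoc : ∀ {A B C E : Obj} (f : Hom A B) (g : Hom B C) (h : Hom C E),
    comp (comp f g) h = comp f (comp g h)
  K : {X A Y : Obj} → Hom X A → Hom A Y → Prop
  D : {A A1 A2 : Obj} → Hom A A1 → Hom A A2 → Prop
  mergeObj : {A A1 A2 : Obj} → (u1 : Hom A A1) → (u2 : Hom A A2) → D u1 u2 → Obj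
  merge1 : {A A1 A2 : Obj} → (u1 : Hom A A1) → (u2 : Hom A A2) → (h : D u1 u2) →
    Hom A1 (mergeObj u1 u2 h)
  merge2 : {A A1 A2 : Obj} → (u1 : Hom A A1) → (u2 : Hom A A2) → (h : D u1 u2) →
    Hom A2 (mergeObj u1 u2 h)
  merge_comm : ∀ {A A1 A2 : Obj} (u1 : Hom A A1) (u2 : Hom A A2) (h : D u1 u2),
    comp u1 (merge1 u1 u2 h) = comp u2 (merge2 u1 u2 h)

/-- Transport an update along an equality of its source object. -/
def ModelSpace.castSrc (M : ModelSpace) {X Y T : M.Obj} (h : X = Y) (f : M.Hom X T) :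
    M.Hom Y T := cast (congrArg (fun Z => M.Hom Z T) h) f

/-- Transport an update along an equality of its target object. -/
def ModelSpace.castTgt (M : ModelSpace) {S T T' : M.Obj} (h : T = T') (f : M.Hom S T) :
    M.Hom S T' := cast (congrArg (fun Z => M.Hom S Z) h) f
/-- A well-behaved model space. -/
structure ModelSpace.WellBehaved (M : ModelSpace) : Prop where
  K_id_right : ∀ {X A : M.Obj} (u : M.Hom X A), M.K u (M.id A)
  K_id_left : ∀ {A Y : M.Obj} (u' : M.Hom A Y), M.K (M.id A) u'
  KK1 : ∀ {A B C E : M.Obj} (u : M.Hom A B) (v : M.Hom B C) (w : M.Hom C E),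
    M.K u (M.comp v w) → M.K v w → M.K u v ∧ M.K (M.comp u v) w
  KK2 : ∀ {A B C E : M.Obj} (u : M.Hom A B) (v : M.Hom B C) (w : M.Hom C E),
    M.K (M.comp u v) w → M.K u v → M.K v w ∧ M.K u (M.comp v w)
  D_K : ∀ {A A1 A2 : M.Obj} (u1 : M.Hom A A1) (u2 : M.Hom A A2) (h : M.D u1 u2),
    M.K u1 (M.merge1 u1 u2 h) ∧ M.K u2 (M.merge2 u1 u2 h)
  mergeSym_D : ∀ {A A1 A2 : M.Obj} (u1 : M.Hom A A1) (u2 : M.Hom A A2),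
    M.D u1 u2 → M.D u2 u1
  mergeSym_obj : ∀ {A A1 A2 : M.Obj} (u1 : M.Hom A A1) (u2 : M.Hom A A2)
    (h : M.D u1 u2) (h' : M.D u2 u1), M.mergeObj u2 u1 h' = M.mergeObj u1 u2 h
  mergeSym_1 : ∀ {A A1 A2 : M.Obj} (u1 : M.Hom A A1) (u2 : M.Hom A A2)
    (h : M.D u1 u2) (h' : M.D u2 u1), HEq (M.merge1 u2 u1 h') (M.merge2 u1 u2 h)
  mergeSym_2 : ∀ {A A1 A2 : M.Obj} (u1 : M.Hom A A1) (u2 : M.Hom A A2)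
    (h : M.D u1 u2) (h' : M.D u2 u1), HEq (M.merge2 u2 u1 h') (M.merge1 u1 u2 h)
  mergeId_D : ∀ {A A' : M.Obj} (u : M.Hom A A'), M.D u (M.id A)
  mergeId_obj : ∀ {A A' : M.Obj} (u : M.Hom A A') (h : M.D u (M.id A)),
    M.mergeObj u (M.id A) h = A'
  mergeId_1 : ∀ {A A' : M.Obj} (u : M.Hom A A') (h : M.D u (M.id A)),
    HEq (M.merge1 u (M.id A) h) (M.id A')
  mergeId_2 : ∀ {A A' : M.Obj} (u : M.Hom A A') (h : M.D u (M.id A)),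
    HEq (M.merge2 u (M.id A) h) u
/-- A multiary (symmetric) delta lens with amendment, over an index type `ι` of feet. -/
structure SymLens (ι : Type) where
  Sp : ι → ModelSpace
  Corr : Type
  bdry : (i : ι) → Corr → (Sp i).Obj
  ppgObj : (i : ι) → (R : Corr) → {A' : (Sp i).Obj} →
    (Sp i).Hom (bdry i R) A' → (j : ι) → (Sp j).Obj
  ppg : (i : ι) → (R : Corr) → {A' : (Sp i).Obj} →
    (u : (Sp i).Hom (bdry i R) A') → (j : ι) → (h : j ≠ i) →
    (Sp j).Hom (bdry j R) (ppgObj i R u j)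
  amend : (i : ι) → (R : Corr) → {A' : (Sp i).Obj} →
    (u : (Sp i).Hom (bdry i R) A') → (Sp i).Hom A' (ppgObj i R u i)
  ppgCorr : (i : ι) → (R : Corr) → {A' : (Sp i).Obj} →
    (Sp i).Hom (bdry i R) A' → Corr
  ppgCorr_bdry : ∀ (i : ι) (R : Corr) {A' : (Sp i).Obj}
    (u : (Sp i).Hom (bdry i R) A') (j : ι),
    bdry j (ppgCorr i R u) = ppgObj i R u j
/-- Well-behavedness of a multiary lens: Stability and Reflect1-3. -/
structure SymLens.WellBehaved {ι : Type} (ℓ : SymLens ι) : Prop where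
  stab_obj : ∀ (i : ι) (R : ℓ.Corr) (j : ι),
    ℓ.ppgObj i R ((ℓ.Sp i).id (ℓ.bdry i R)) j = ℓ.bdry j R
  stab_ppg : ∀ (i : ι) (R : ℓ.Corr) (j : ι) (h : j ≠ i),
    HEq (ℓ.ppg i R ((ℓ.Sp i).id (ℓ.bdry i R)) j h) ((ℓ.Sp j).id (ℓ.bdry j R))
  stab_amend : ∀ (i : ι) (R : ℓ.Corr),
    HEq (ℓ.amend i R ((ℓ.Sp i).id (ℓ.bdry i R))) ((ℓ.Sp i).id (ℓ.bdry i R))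
  stab_corr : ∀ (i : ι) (R : ℓ.Corr), ℓ.ppgCorr i R ((ℓ.Sp i).id (ℓ.bdry i R)) = R
  reflect1 : ∀ (i : ι) (R : ℓ.Corr) {A' : (ℓ.Sp i).Obj}
    (u : (ℓ.Sp i).Hom (ℓ.bdry i R) A'), (ℓ.Sp i).K u (ℓ.amend i R u)
  reflect2_obj : ∀ (i : ι) (R : ℓ.Corr) {A' : (ℓ.Sp i).Obj}
    (u : (ℓ.Sp i).Hom (ℓ.bdry i R) A') (j : ι), j ≠ i →
    ℓ.ppgObj i R ((ℓ.Sp i).comp u (ℓ.amend i R u)) j = ℓ.ppgObj i R u j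
  reflect2 : ∀ (i : ι) (R : ℓ.Corr) {A' : (ℓ.Sp i).Obj}
    (u : (ℓ.Sp i).Hom (ℓ.bdry i R) A') (j : ι) (h : j ≠ i),
    HEq (ℓ.ppg i R ((ℓ.Sp i).comp u (ℓ.amend i R u)) j h) (ℓ.ppg i R u j h)
  reflect3_obj : ∀ (i : ι) (R : ℓ.Corr) {A' : (ℓ.Sp i).Obj}
    (u : (ℓ.Sp i).Hom (ℓ.bdry i R) A'),
    ℓ.ppgObj i R ((ℓ.Sp i).comp u (ℓ.amend i R u)) i = ℓ.ppgObj i R u i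
  reflect3 : ∀ (i : ι) (R : ℓ.Corr) {A' : (ℓ.Sp i).Obj}
    (u : (ℓ.Sp i).Hom (ℓ.bdry i R) A'),
    HEq (ℓ.amend i R ((ℓ.Sp i).comp u (ℓ.amend i R u))) ((ℓ.Sp i).id (ℓ.ppgObj i R u i))
/-- The update `ṽ` of the K-Putput law: the complement of the amendment in the merge
of `v` with the amendment of `u`, re-sourced at the new corr. -/
def SymLens.kppAux {ι : Type} (ℓ : SymLens ι) (i : ι) (R : ℓ.Corr)
    {A' B0 : (ℓ.Sp i).Obj} (u : (ℓ.Sp i).Hom (ℓ.bdry i R) A')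
    (v : (ℓ.Sp i).Hom A' B0) (hD : (ℓ.Sp i).D v (ℓ.amend i R u)) :
    (ℓ.Sp i).Hom (ℓ.bdry i (ℓ.ppgCorr i R u))
      ((ℓ.Sp i).mergeObj v (ℓ.amend i R u) hD) :=
  (ℓ.Sp i).castSrc (ℓ.ppgCorr_bdry i R u i).symm
    ((ℓ.Sp i).merge2 v (ℓ.amend i R u) hD)

/-- Very well-behaved lenses: well-behaved plus the K-Putput law. -/
structure SymLens.VeryWellBehaved {ι : Type} (ℓ : SymLens ι)
    extends SymLens.WellBehaved ℓ : Prop where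
  kpp_obj : ∀ (i : ι) (R : ℓ.Corr) {A' B0 : (ℓ.Sp i).Obj}
    (u : (ℓ.Sp i).Hom (ℓ.bdry i R) A') (v : (ℓ.Sp i).Hom A' B0),
    (ℓ.Sp i).K u v → ∀ (hD : (ℓ.Sp i).D v (ℓ.amend i R u)) (j : ι), j ≠ i →
    ℓ.ppgObj i R ((ℓ.Sp i).comp u v) j =
      ℓ.ppgObj i (ℓ.ppgCorr i R u) (ℓ.kppAux i R u v hD) j
  kpp_ppg : ∀ (i : ι) (R : ℓ.Corr) {A' B0 : (ℓ.Sp i).Obj}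
    (u : (ℓ.Sp i).Hom (ℓ.bdry i R) A') (v : (ℓ.Sp i).Hom A' B0),
    (ℓ.Sp i).K u v → ∀ (hD : (ℓ.Sp i).D v (ℓ.amend i R u)) (j : ι) (hj : j ≠ i),
    HEq (ℓ.ppg i R ((ℓ.Sp i).comp u v) j hj)
      ((ℓ.Sp j).comp (ℓ.ppg i R u j hj)
        ((ℓ.Sp j).castSrc (ℓ.ppgCorr_bdry i R u j)
          (ℓ.ppg i (ℓ.ppgCorr i R u) (ℓ.kppAux i R u v hD) j hj)))
  kpp_K : ∀ (i : ι) (R : ℓ.Corr) {A' B0 : (ℓ.Sp i).Obj}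
    (u : (ℓ.Sp i).Hom (ℓ.bdry i R) A') (v : (ℓ.Sp i).Hom A' B0),
    (ℓ.Sp i).K u v → ∀ (hD : (ℓ.Sp i).D v (ℓ.amend i R u)) (j : ι) (hj : j ≠ i),
    (ℓ.Sp j).K (ℓ.ppg i R u j hj)
      ((ℓ.Sp j).castSrc (ℓ.ppgCorr_bdry i R u j)
        (ℓ.ppg i (ℓ.ppgCorr i R u) (ℓ.kppAux i R u v hD) j hj))
  kpp_amend_obj : ∀ (i : ι) (R : ℓ.Corr) {A' B0 : (ℓ.Sp i).Obj}
    (u : (ℓ.Sp i).Hom (ℓ.bdry i R) A') (v : (ℓ.Sp i).Hom A' B0),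
    (ℓ.Sp i).K u v → ∀ (hD : (ℓ.Sp i).D v (ℓ.amend i R u)),
    ℓ.ppgObj i R ((ℓ.Sp i).comp u v) i =
      ℓ.ppgObj i (ℓ.ppgCorr i R u) (ℓ.kppAux i R u v hD) i
  kpp_amend : ∀ (i : ι) (R : ℓ.Corr) {A' B0 : (ℓ.Sp i).Obj}
    (u : (ℓ.Sp i).Hom (ℓ.bdry i R) A') (v : (ℓ.Sp i).Hom A' B0),
    (ℓ.Sp i).K u v → ∀ (hD : (ℓ.Sp i).D v (ℓ.amend i R u)),
    HEq (ℓ.amend i R ((ℓ.Sp i).comp u v))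
      ((ℓ.Sp i).comp ((ℓ.Sp i).merge1 v (ℓ.amend i R u) hD)
        (ℓ.amend i (ℓ.ppgCorr i R u) (ℓ.kppAux i R u v hD)))
/-- Weak invertibility (round-tripping) of a multiary lens. -/
def SymLens.Invertible {ι : Type} (ℓ : SymLens ι) : Prop :=
  ∀ (i : ι) (R : ℓ.Corr) {A' : (ℓ.Sp i).Obj} (u : (ℓ.Sp i).Hom (ℓ.bdry i R) A')
    (j : ι) (hj : j ≠ i),
    ℓ.ppgObj i R (ℓ.ppg j R (ℓ.ppg i R u j hj) i (Ne.symm hj)) j = ℓ.ppgObj i R u j ∧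
    HEq (ℓ.ppg i R (ℓ.ppg j R (ℓ.ppg i R u j hj) i (Ne.symm hj)) j hj)
      (ℓ.ppg i R u j hj)
/-- An update of the `i`-th foot is `ℓ`-closed if the lens amends it identically
over every corr at which it can be propagated. -/
def SymLens.ClosedUpd {ι : Type} (ℓ : SymLens ι) (i : ι) {X A' : (ℓ.Sp i).Obj}
    (u : (ℓ.Sp i).Hom X A') : Prop :=
  ∀ (S : ℓ.Corr) (h : ℓ.bdry i S = X),
    ℓ.ppgObj i S ((ℓ.Sp i).castSrc h.symm u) i = A' ∧
    HEq (ℓ.amend i S ((ℓ.Sp i).castSrc h.symm u)) ((ℓ.Sp i).id A')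
/-- A binary symmetric lens between a "base" space `B` and a "view" space `A`. -/
structure BLens (B A : ModelSpace) where
  Corr : Type
  bB : Corr → B.Obj
  bA : Corr → A.Obj
  ppgBAObj : (R : Corr) → {B' : B.Obj} → B.Hom (bB R) B' → A.Obj
  ppgBA : (R : Corr) → {B' : B.Obj} → (u : B.Hom (bB R) B') → A.Hom (bA R) (ppgBAObj R u)
  amendBObj : (R : Corr) → {B' : B.Obj} → B.Hom (bB R) B' → B.Obj
  amendB : (R : Corr) → {B' : B.Obj} → (u : B.Hom (bB R) B') → B.Hom B' (amendBObj R u)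
  ppgBACorr : (R : Corr) → {B' : B.Obj} → B.Hom (bB R) B' → Corr
  ppgBACorr_bB : ∀ (R : Corr) {B' : B.Obj} (u : B.Hom (bB R) B'),
    bB (ppgBACorr R u) = amendBObj R u
  ppgBACorr_bA : ∀ (R : Corr) {B' : B.Obj} (u : B.Hom (bB R) B'),
    bA (ppgBACorr R u) = ppgBAObj R u
  ppgABObj : (R : Corr) → {A' : A.Obj} → A.Hom (bA R) A' → B.Obj
  ppgAB : (R : Corr) → {A' : A.Obj} → (v : A.Hom (bA R) A') → B.Hom (bB R) (ppgABObj R v)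
  amendAObj : (R : Corr) → {A' : A.Obj} → A.Hom (bA R) A' → A.Obj
  amendA : (R : Corr) → {A' : A.Obj} → (v : A.Hom (bA R) A') → A.Hom A' (amendAObj R v)
  ppgABCorr : (R : Corr) → {A' : A.Obj} → A.Hom (bA R) A' → Corr
  ppgABCorr_bB : ∀ (R : Corr) {A' : A.Obj} (v : A.Hom (bA R) A'),
    bB (ppgABCorr R v) = ppgABObj R v
  ppgABCorr_bA : ∀ (R : Corr) {A' : A.Obj} (v : A.Hom (bA R) A'),
    bA (ppgABCorr R v) = amendAObj R v
/-- A binary lens viewed as a symmetric lens over `Bool` (`false` = base, `true` = view). -/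
def BLens.toSym {B A : ModelSpace} (b : BLens B A) : SymLens Bool where
  Sp := fun i => match i with
    | false => B
    | true => A
  Corr := b.Corr
  bdry := fun i => match i with
    | false => fun R => b.bB R
    | true => fun R => b.bA R
  ppgObj := fun i R {A'} u j =>
    match i, A', u, j with
    | false, _, u, false => b.amendBObj R u
    | false, _, u, true => b.ppgBAObj R u
    | true, _, v, false => b.ppgABObj R v
    | true, _, v, true => b.amendAObj R v
  ppg := fun i R {A'} u j hj =>
    match i, A', u, j, hj with
    | false, _, _, false, hj => absurd rfl hj
    | false, _, u, true, _ => b.ppgBA R u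
    | true, _, v, false, _ => b.ppgAB R v
    | true, _, _, true, hj => absurd rfl hj
  amend := fun i R {A'} u =>
    match i, A', u with
    | false, _, u => b.amendB R u
    | true, _, v => b.amendA R v
  ppgCorr := fun i R {A'} u =>
    match i, A', u with
    | false, _, u => b.ppgBACorr R u
    | true, _, v => b.ppgABCorr R v
  ppgCorr_bdry := by
    intro i R A' u j
    cases i <;> cases j
    · exact b.ppgBACorr_bB R u
    · exact b.ppgBACorr_bA R u
    · exact b.ppgABCorr_bB R u
    · exact b.ppgABCorr_bA R u

/-- Well-behavedness of a binary lens. -/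
def BLens.WellBehaved {B A : ModelSpace} (b : BLens B A) : Prop :=
  b.toSym.WellBehaved

/-- (Weak) invertibility of a binary lens. -/
def BLens.Invertible {B A : ModelSpace} (b : BLens B A) : Prop :=
  b.toSym.Invertible

/-- All base-side updates of the binary lens are closed (identity amendments). -/
def BLens.BaseClosed {B A : ModelSpace} (b : BLens B A) : Prop :=
  ∀ (R : b.Corr) {B' : B.Obj} (u : B.Hom (b.bB R) B'),
    b.amendBObj R u = B' ∧ HEq (b.amendB R u) (B.id B')

/-- A view update is `b`-closed: the lens amends it identically over every
corr at which it can be propagated. -/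
def BLens.ClosedA {B A : ModelSpace} (b : BLens B A) {X A' : A.Obj}
    (v : A.Hom X A') : Prop :=
  ∀ (R : b.Corr) (h : b.bA R = X),
    b.amendAObj R (A.castSrc h.symm v) = A' ∧
    HEq (b.amendA R (A.castSrc h.symm v)) (A.id A')
/-- Very well-behavedness of a binary lens. -/
def BLens.VeryWellBehaved {B A : ModelSpace} (b : BLens B A) : Prop :=
  b.toSym.VeryWellBehaved
section Star

variable {ι : Type} [DecidableEq ι] (k : SymLens ι) (Bsp : ι → ModelSpace)
  (b : ∀ i, BLens (Bsp i) (k.Sp i))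

/-- A corr of the star composition: a central corr together with a corr for each
peripheral binary lens, compatible at the shared feet. -/
structure StarCorr where
  S : k.Corr
  rho : ∀ i, (b i).Corr
  compat : ∀ i, (b i).bA (rho i) = k.bdry i S

/-- The update propagated by `b i` into the `i`-th foot of `k`. -/
def starU (R : StarCorr k Bsp b) (i : ι) {B' : (Bsp i).Obj}
    (v : (Bsp i).Hom ((b i).bB (R.rho i)) B') :
    (k.Sp i).Hom (k.bdry i R.S) ((b i).ppgBAObj (R.rho i) v) :=
  (k.Sp i).castSrc (R.compat i) ((b i).ppgBA (R.rho i) v)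

/-- The update propagated by `k` to the `j`-th foot, re-sourced at `b j`'s view boundary. -/
def starW (R : StarCorr k Bsp b) (i : ι) {B' : (Bsp i).Obj}
    (v : (Bsp i).Hom ((b i).bB (R.rho i)) B') (j : ι) (hj : j ≠ i) :
    (k.Sp j).Hom ((b j).bA (R.rho j)) (k.ppgObj i R.S (starU k Bsp b R i v) j) :=
  (k.Sp j).castSrc (R.compat j).symm (k.ppg i R.S (starU k Bsp b R i v) j hj)

/-- Star composition of an `ι`-ary lens `k` with binary lenses `b i` sharing its
feet, under the junction conditions `J1`, `J2`. -/
def SymLens.star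
    (J1 : ∀ (i : ι) (R : (b i).Corr) {B' : (Bsp i).Obj}
      (u : (Bsp i).Hom ((b i).bB R) B'), k.ClosedUpd i ((b i).ppgBA R u))
    (J2 : ∀ (i j : ι) (hj : j ≠ i) (S : k.Corr) {A' : (k.Sp i).Obj}
      (u : (k.Sp i).Hom (k.bdry i S) A'), (b j).ClosedA (k.ppg i S u j hj)) :
    SymLens ι where
  Sp := Bsp
  Corr := StarCorr k Bsp b
  bdry := fun i R => (b i).bB (R.rho i)
  ppgObj := fun i R {B'} v j =>
    if h : j = i then
      cast (congrArg (fun z => (Bsp z).Obj) h.symm) ((b i).amendBObj (R.rho i) v)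
    else (b j).ppgABObj (R.rho j) (starW k Bsp b R i v j h)
  ppg := fun i R {B'} v j hj =>
    (Bsp j).castTgt (dif_neg hj).symm ((b j).ppgAB (R.rho j) (starW k Bsp b R i v j hj))
  amend := fun i R {B'} v =>
    (Bsp i).castTgt (dif_pos rfl).symm ((b i).amendB (R.rho i) v)
  ppgCorr := fun i R {B'} v =>
    { S := k.ppgCorr i R.S (starU k Bsp b R i v)
      rho := fun j =>
        if h : j = i then
          cast (congrArg (fun z => (b z).Corr) h.symm) ((b i).ppgBACorr (R.rho i) v)
        else (b j).ppgABCorr (R.rho j) (starW k Bsp b R i v j h)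
      compat := by
        intro j
        by_cases h : j = i
        · subst h
          try dsimp only
          rw [dif_pos rfl, k.ppgCorr_bdry]
          exact ((b j).ppgBACorr_bA (R.rho j) v).trans
            ((J1 j (R.rho j) v R.S (R.compat j).symm).1).symm
        · try dsimp only
          rw [dif_neg h, k.ppgCorr_bdry]
          exact ((b j).ppgABCorr_bA (R.rho j) _).trans
            ((J2 i j h R.S (starU k Bsp b R i v) (R.rho j) (R.compat j)).1) }
  ppgCorr_bdry := by
    intro i R B' v j
    by_cases h : j = i
    · subst h
      dsimp only
      rw [dif_pos rfl, dif_pos rfl]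
      exact (b j).ppgBACorr_bB (R.rho j) v
    · dsimp only
      rw [dif_neg h, dif_neg h]
      exact (b j).ppgABCorr_bB (R.rho j) _


namespace ModelSpace

variable (M : ModelSpace)

theorem castSrc_heq {X Y T : M.Obj} (h : X = Y) (f : M.Hom X T) :
    HEq (M.castSrc h f) f := by subst h; rfl

theorem castTgt_heq {S T T' : M.Obj} (h : T = T') (f : M.Hom S T) :
    HEq (M.castTgt h f) f := by subst h; rfl

theorem id_heq {A A' : M.Obj} (h : A = A') : HEq (M.id A) (M.id A') := by subst h; rfl

theorem comp_congr {A B C A' B' C' : M.Obj} (hA : A = A') (hB : B = B') (hC : C = C')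
    {f : M.Hom A B} {f' : M.Hom A' B'} {g : M.Hom B C} {g' : M.Hom B' C'}
    (hf : HEq f f') (hg : HEq g g') : HEq (M.comp f g) (M.comp f' g') := by
  subst hA; subst hB; subst hC; cases hf; cases hg; rfl

theorem K_congr {X A Y X' A' Y' : M.Obj} (hX : X = X') (hA : A = A') (hY : Y = Y')
    {f : M.Hom X A} {f' : M.Hom X' A'} {g : M.Hom A Y} {g' : M.Hom A' Y'}
    (hf : HEq f f') (hg : HEq g g') : M.K f g ↔ M.K f' g' := by
  subst hX; subst hA; subst hY; cases hf; cases hg; rfl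

theorem D_congr {A A1 A2 A' A1' A2' : M.Obj} (hA : A = A') (h1 : A1 = A1') (h2 : A2 = A2')
    {f : M.Hom A A1} {f' : M.Hom A' A1'} {g : M.Hom A A2} {g' : M.Hom A' A2'}
    (hf : HEq f f') (hg : HEq g g') : M.D f g ↔ M.D f' g' := by
  subst hA; subst h1; subst h2; cases hf; cases hg; rfl

theorem merge_congr {A A1 A2 A' A1' A2' : M.Obj} (hA : A = A') (h1 : A1 = A1') (h2 : A2 = A2')
    {f : M.Hom A A1} {f' : M.Hom A' A1'} {g : M.Hom A A2} {g' : M.Hom A' A2'}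
    (hf : HEq f f') (hg : HEq g g') (hD : M.D f g) (hD' : M.D f' g') :
    M.mergeObj f g hD = M.mergeObj f' g' hD' ∧ HEq (M.merge1 f g hD) (M.merge1 f' g' hD')
      ∧ HEq (M.merge2 f g hD) (M.merge2 f' g' hD') := by
  subst hA; subst h1; subst h2; cases hf; cases hg; exact ⟨rfl, HEq.rfl, HEq.rfl⟩

/-- Merging against an update that is essentially an identity. -/
theorem mergeId' (hM : M.WellBehaved) {A' Z T : M.Obj} (hZ : Z = A') (w : M.Hom A' Z)
    (hw : HEq w (M.id A')) (y : M.Hom A' T) :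
    ∃ h : M.D y w, M.mergeObj y w h = T ∧ HEq (M.merge1 y w h) (M.id T)
      ∧ HEq (M.merge2 y w h) y := by
  subst hZ; cases hw
  exact ⟨hM.mergeId_D y, hM.mergeId_obj y _, hM.mergeId_1 y _, hM.mergeId_2 y _⟩

theorem comp_castTgt {A B B' C : M.Obj} (h : B = B') (f : M.Hom A B) (g : M.Hom B' C) :
    M.comp (M.castTgt h f) g = M.comp f (M.castSrc h.symm g) := by subst h; rfl

end ModelSpace

namespace SymLens

variable {ι : Type} (ℓ : SymLens ι)

theorem congr_ppgObj (i : ι) {R R' : ℓ.Corr} (hR : R = R') {A' A'' : (ℓ.Sp i).Obj}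
    (hT : A' = A'') {u : (ℓ.Sp i).Hom (ℓ.bdry i R) A'} {u' : (ℓ.Sp i).Hom (ℓ.bdry i R') A''}
    (hu : HEq u u') (j : ι) : ℓ.ppgObj i R u j = ℓ.ppgObj i R' u' j := by
  subst hR; subst hT; cases hu; rfl

theorem congr_ppg (i : ι) {R R' : ℓ.Corr} (hR : R = R') {A' A'' : (ℓ.Sp i).Obj}
    (hT : A' = A'') {u : (ℓ.Sp i).Hom (ℓ.bdry i R) A'} {u' : (ℓ.Sp i).Hom (ℓ.bdry i R') A''}
    (hu : HEq u u') (j : ι) (hj : j ≠ i) : HEq (ℓ.ppg i R u j hj) (ℓ.ppg i R' u' j hj) := by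
  subst hR; subst hT; cases hu; rfl

theorem congr_amend (i : ι) {R R' : ℓ.Corr} (hR : R = R') {A' A'' : (ℓ.Sp i).Obj}
    (hT : A' = A'') {u : (ℓ.Sp i).Hom (ℓ.bdry i R) A'} {u' : (ℓ.Sp i).Hom (ℓ.bdry i R') A''}
    (hu : HEq u u') : HEq (ℓ.amend i R u) (ℓ.amend i R' u') := by
  subst hR; subst hT; cases hu; rfl

theorem congr_ppgCorr (i : ι) {R R' : ℓ.Corr} (hR : R = R') {A' A'' : (ℓ.Sp i).Obj}
    (hT : A' = A'') {u : (ℓ.Sp i).Hom (ℓ.bdry i R) A'} {u' : (ℓ.Sp i).Hom (ℓ.bdry i R') A''}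
    (hu : HEq u u') : ℓ.ppgCorr i R u = ℓ.ppgCorr i R' u' := by
  subst hR; subst hT; cases hu; rfl

end SymLens

theorem StarCorr.ext' {ι : Type} [DecidableEq ι] {k : SymLens ι} {Bsp : ι → ModelSpace}
    {b : ∀ i, BLens (Bsp i) (k.Sp i)} {R R' : StarCorr k Bsp b}
    (hS : R.S = R'.S) (hrho : R.rho = R'.rho) : R = R' := by
  cases R; cases R'; cases hS; cases hrho; rfl

namespace BLens.WellBehaved

variable {B A : ModelSpace} {b : BLens B A}

theorem wb_stabBA_obj (hb : b.WellBehaved) (R : b.Corr) :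
    b.ppgBAObj R (B.id (b.bB R)) = b.bA R := hb.stab_obj false R true

theorem wb_stabBA (hb : b.WellBehaved) (R : b.Corr) :
    HEq (b.ppgBA R (B.id (b.bB R))) (A.id (b.bA R)) :=
  hb.stab_ppg false R true (by simp)

theorem wb_stabB_amend_obj (hb : b.WellBehaved) (R : b.Corr) :
    b.amendBObj R (B.id (b.bB R)) = b.bB R := hb.stab_obj false R false

theorem wb_stabB_amend (hb : b.WellBehaved) (R : b.Corr) :
    HEq (b.amendB R (B.id (b.bB R))) (B.id (b.bB R)) := hb.stab_amend false R

theorem wb_stabBA_corr (hb : b.WellBehaved) (R : b.Corr) :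
    b.ppgBACorr R (B.id (b.bB R)) = R := hb.stab_corr false R

theorem wb_stabAB_obj (hb : b.WellBehaved) (R : b.Corr) :
    b.ppgABObj R (A.id (b.bA R)) = b.bB R := hb.stab_obj true R false

theorem wb_stabAB (hb : b.WellBehaved) (R : b.Corr) :
    HEq (b.ppgAB R (A.id (b.bA R))) (B.id (b.bB R)) :=
  hb.stab_ppg true R false (by simp)

theorem wb_refl1B (hb : b.WellBehaved) (R : b.Corr) {B' : B.Obj} (u : B.Hom (b.bB R) B') :
    B.K u (b.amendB R u) := hb.reflect1 false R u

theorem wb_refl2BA_obj (hb : b.WellBehaved) (R : b.Corr) {B' : B.Obj}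
    (u : B.Hom (b.bB R) B') :
    b.ppgBAObj R (B.comp u (b.amendB R u)) = b.ppgBAObj R u :=
  hb.reflect2_obj false R u true (by simp)

theorem wb_refl2BA (hb : b.WellBehaved) (R : b.Corr) {B' : B.Obj}
    (u : B.Hom (b.bB R) B') :
    HEq (b.ppgBA R (B.comp u (b.amendB R u))) (b.ppgBA R u) :=
  hb.reflect2 false R u true (by simp)

theorem wb_refl3B_obj (hb : b.WellBehaved) (R : b.Corr) {B' : B.Obj}
    (u : B.Hom (b.bB R) B') :
    b.amendBObj R (B.comp u (b.amendB R u)) = b.amendBObj R u := hb.reflect3_obj false R u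

theorem wb_refl3B (hb : b.WellBehaved) (R : b.Corr) {B' : B.Obj}
    (u : B.Hom (b.bB R) B') :
    HEq (b.amendB R (B.comp u (b.amendB R u))) (B.id (b.amendBObj R u)) :=
  hb.reflect3 false R u

end BLens.WellBehaved

namespace BLens

variable {B A : ModelSpace} (b : BLens B A)

theorem congrB {R R' : b.Corr} (hR : R = R') {B1 B2 : B.Obj} (hT : B1 = B2)
    {u : B.Hom (b.bB R) B1} {u' : B.Hom (b.bB R') B2} (hu : HEq u u') :
    b.ppgBAObj R u = b.ppgBAObj R' u' ∧ HEq (b.ppgBA R u) (b.ppgBA R' u') ∧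
    b.amendBObj R u = b.amendBObj R' u' ∧ HEq (b.amendB R u) (b.amendB R' u') ∧
    b.ppgBACorr R u = b.ppgBACorr R' u' := by
  subst hR; subst hT; cases hu; exact ⟨rfl, HEq.rfl, rfl, HEq.rfl, rfl⟩

theorem congrA {R R' : b.Corr} (hR : R = R') {A1 A2 : A.Obj} (hT : A1 = A2)
    {v : A.Hom (b.bA R) A1} {v' : A.Hom (b.bA R') A2} (hv : HEq v v') :
    b.ppgABObj R v = b.ppgABObj R' v' ∧ HEq (b.ppgAB R v) (b.ppgAB R' v') ∧
    b.amendAObj R v = b.amendAObj R' v' ∧ HEq (b.amendA R v) (b.amendA R' v') ∧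
    b.ppgABCorr R v = b.ppgABCorr R' v' := by
  subst hR; subst hT; cases hv; exact ⟨rfl, HEq.rfl, rfl, HEq.rfl, rfl⟩

end BLens

section StarLemmas

variable {ι : Type} [DecidableEq ι] {k : SymLens ι} {Bsp : ι → ModelSpace}
  {b : ∀ i, BLens (Bsp i) (k.Sp i)}
  {J1 : ∀ (i : ι) (R : (b i).Corr) {B' : (Bsp i).Obj}
      (u : (Bsp i).Hom ((b i).bB R) B'), k.ClosedUpd i ((b i).ppgBA R u)}
  {J2 : ∀ (i j : ι) (hj : j ≠ i) (S : k.Corr) {A' : (k.Sp i).Obj}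
      (u : (k.Sp i).Hom (k.bdry i S) A'), (b j).ClosedA (k.ppg i S u j hj)}


theorem star_ppgObj_ne (i : ι) (R : StarCorr k Bsp b) {B' : (Bsp i).Obj}
    (v : (Bsp i).Hom ((b i).bB (R.rho i)) B') (j : ι) (hj : j ≠ i) :
    (SymLens.star k Bsp b J1 J2).ppgObj i R v j = (b j).ppgABObj (R.rho j) (starW k Bsp b R i v j hj) :=
  dif_neg hj

theorem star_ppgObj_eq (i : ι) (R : StarCorr k Bsp b) {B' : (Bsp i).Obj}
    (v : (Bsp i).Hom ((b i).bB (R.rho i)) B') :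
    (SymLens.star k Bsp b J1 J2).ppgObj i R v i = (b i).amendBObj (R.rho i) v := by
  show dite _ _ _ = _
  refine (dif_pos rfl).trans ?_
  exact cast_eq _ _

theorem star_ppg_heq (i : ι) (R : StarCorr k Bsp b) {B' : (Bsp i).Obj}
    (v : (Bsp i).Hom ((b i).bB (R.rho i)) B') (j : ι) (hj : j ≠ i) :
    HEq ((SymLens.star k Bsp b J1 J2).ppg i R v j hj) ((b j).ppgAB (R.rho j) (starW k Bsp b R i v j hj)) :=
  by
  show HEq ((Bsp j).castTgt (star_ppgObj_ne (J1 := J1) (J2 := J2) i R v j hj).symm ((b j).ppgAB (R.rho j) (starW k Bsp b R i v j hj))) _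
  exact (Bsp j).castTgt_heq _ _

theorem star_amend_heq (i : ι) (R : StarCorr k Bsp b) {B' : (Bsp i).Obj}
    (v : (Bsp i).Hom ((b i).bB (R.rho i)) B') :
    HEq ((SymLens.star k Bsp b J1 J2).amend i R v) ((b i).amendB (R.rho i) v) :=
  by
  show HEq ((Bsp i).castTgt (star_ppgObj_eq (J1 := J1) (J2 := J2) i R v).symm ((b i).amendB (R.rho i) v)) _
  exact (Bsp i).castTgt_heq _ _

theorem star_ppgCorr_S (i : ι) (R : StarCorr k Bsp b) {B' : (Bsp i).Obj}
    (v : (Bsp i).Hom ((b i).bB (R.rho i)) B') :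
    ((SymLens.star k Bsp b J1 J2).ppgCorr i R v).S = k.ppgCorr i R.S (starU k Bsp b R i v) := rfl

theorem star_ppgCorr_rho_ne (i : ι) (R : StarCorr k Bsp b) {B' : (Bsp i).Obj}
    (v : (Bsp i).Hom ((b i).bB (R.rho i)) B') (j : ι) (hj : j ≠ i) :
    ((SymLens.star k Bsp b J1 J2).ppgCorr i R v).rho j = (b j).ppgABCorr (R.rho j) (starW k Bsp b R i v j hj) :=
  dif_neg hj

theorem star_ppgCorr_rho_eq (i : ι) (R : StarCorr k Bsp b) {B' : (Bsp i).Obj}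
    (v : (Bsp i).Hom ((b i).bB (R.rho i)) B') :
    ((SymLens.star k Bsp b J1 J2).ppgCorr i R v).rho i = (b i).ppgBACorr (R.rho i) v := by
  show dite _ _ _ = _
  rw [dif_pos rfl]
  exact cast_eq _ _

theorem starW_congr (i : ι) (R : StarCorr k Bsp b) {B1 B2 : (Bsp i).Obj}
    {v : (Bsp i).Hom ((b i).bB (R.rho i)) B1} {v' : (Bsp i).Hom ((b i).bB (R.rho i)) B2}
    (hBAobj : (b i).ppgBAObj (R.rho i) v = (b i).ppgBAObj (R.rho i) v')
    (hBA : HEq ((b i).ppgBA (R.rho i) v) ((b i).ppgBA (R.rho i) v')) :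
    (∀ (j : ι), k.ppgObj i R.S (starU k Bsp b R i v) j
        = k.ppgObj i R.S (starU k Bsp b R i v') j) ∧
    (∀ (j : ι) (hj : j ≠ i), HEq (starW k Bsp b R i v j hj) (starW k Bsp b R i v' j hj)) ∧
    k.ppgCorr i R.S (starU k Bsp b R i v) = k.ppgCorr i R.S (starU k Bsp b R i v') := by
  have hU : HEq (starU k Bsp b R i v) (starU k Bsp b R i v') :=
    ((k.Sp i).castSrc_heq _ _).trans (hBA.trans ((k.Sp i).castSrc_heq _ _).symm)
  refine ⟨fun j => k.congr_ppgObj i rfl hBAobj hU j, fun j hj => ?_,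
    k.congr_ppgCorr i rfl hBAobj hU⟩
  exact ((k.Sp j).castSrc_heq _ _).trans ((k.congr_ppg i rfl hBAobj hU j hj).trans
    ((k.Sp j).castSrc_heq _ _).symm)

theorem starW_id (hk : k.WellBehaved) (hbi : ∀ i, (b i).WellBehaved) (i : ι)
    (R : StarCorr k Bsp b) :
    (∀ (j : ι), k.ppgObj i R.S (starU k Bsp b R i ((Bsp i).id ((b i).bB (R.rho i)))) j
        = (b j).bA (R.rho j)) ∧
    (∀ (j : ι) (hj : j ≠ i),
      HEq (starW k Bsp b R i ((Bsp i).id ((b i).bB (R.rho i))) j hj)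
        ((k.Sp j).id ((b j).bA (R.rho j)))) ∧
    k.ppgCorr i R.S (starU k Bsp b R i ((Bsp i).id ((b i).bB (R.rho i)))) = R.S := by
  have hTobj : (b i).ppgBAObj (R.rho i) ((Bsp i).id ((b i).bB (R.rho i))) = k.bdry i R.S :=
    ((hbi i).wb_stabBA_obj (R.rho i)).trans (R.compat i)
  have hU : HEq (starU k Bsp b R i ((Bsp i).id ((b i).bB (R.rho i))))
      ((k.Sp i).id (k.bdry i R.S)) :=
    ((k.Sp i).castSrc_heq _ _).trans (((hbi i).wb_stabBA (R.rho i)).trans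
      ((k.Sp i).id_heq (R.compat i)))
  refine ⟨fun j => ?_, fun j hj => ?_, ?_⟩
  · exact (k.congr_ppgObj i rfl hTobj hU j).trans ((hk.stab_obj i R.S j).trans
      (R.compat j).symm)
  · exact ((k.Sp j).castSrc_heq _ _).trans (((k.congr_ppg i rfl hTobj hU j hj).trans
      (hk.stab_ppg i R.S j hj)).trans ((k.Sp j).id_heq (R.compat j).symm))
  · exact (k.congr_ppgCorr i rfl hTobj hU).trans (hk.stab_corr i R.S)

theorem star_wb (hk : k.WellBehaved) (hb : ∀ i, (b i).WellBehaved) :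
    (SymLens.star k Bsp b J1 J2).WellBehaved := by
  constructor
  case stab_obj =>
    intro i R j
    by_cases h : j = i
    · subst h
      exact (star_ppgObj_eq (J1 := J1) (J2 := J2) j R _).trans
        ((hb j).wb_stabB_amend_obj (R.rho j))
    · refine (star_ppgObj_ne (J1 := J1) (J2 := J2) i R _ j h).trans ?_
      have hW := (starW_id hk hb i R)
      exact ((b j).congrA rfl (hW.1 j) (hW.2.1 j h)).1.trans ((hb j).wb_stabAB_obj (R.rho j))
  case stab_ppg =>
    intro i R j hj
    have hW := (starW_id hk hb i R)
    exact (star_ppg_heq (J1 := J1) (J2 := J2) i R _ j hj).trans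
      ((((b j).congrA rfl (hW.1 j) (hW.2.1 j hj)).2.1).trans ((hb j).wb_stabAB (R.rho j)))
  case stab_amend =>
    intro i R
    exact (star_amend_heq (J1 := J1) (J2 := J2) i R _).trans ((hb i).wb_stabB_amend (R.rho i))
  case stab_corr =>
    intro i R
    have hW := (starW_id hk hb i R)
    refine StarCorr.ext' hW.2.2 (funext fun j => ?_)
    by_cases h : j = i
    · subst h
      exact (star_ppgCorr_rho_eq (J1 := J1) (J2 := J2) j R _).trans
        ((hb j).wb_stabBA_corr (R.rho j))
    · exact (star_ppgCorr_rho_ne (J1 := J1) (J2 := J2) i R _ j h).trans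
        ((((b j).congrA rfl (hW.1 j) (hW.2.1 j h)).2.2.2.2).trans ((hb j).stab_corr true (R.rho j)))
  case reflect1 =>
    intro i R B' v
    exact ((Bsp i).K_congr rfl rfl (star_ppgObj_eq (J1 := J1) (J2 := J2) i R v).symm HEq.rfl
      (star_amend_heq (J1 := J1) (J2 := J2) i R v).symm).mp ((hb i).wb_refl1B (R.rho i) v)
  case reflect2_obj =>
    intro i R B' v j hj
    have hcmp : HEq ((Bsp i).comp v ((SymLens.star k Bsp b J1 J2).amend i R v))
        ((Bsp i).comp v ((b i).amendB (R.rho i) v)) :=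
      (Bsp i).comp_congr rfl rfl (star_ppgObj_eq (J1 := J1) (J2 := J2) i R v) HEq.rfl
        (star_amend_heq (J1 := J1) (J2 := J2) i R v)
    have h1 := (b i).congrB rfl (star_ppgObj_eq (J1 := J1) (J2 := J2) i R v) hcmp
    have hW := starW_congr i R
      (h1.1.trans ((hb i).wb_refl2BA_obj (R.rho i) v))
      (h1.2.1.trans ((hb i).wb_refl2BA (R.rho i) v))
    refine (star_ppgObj_ne (J1 := J1) (J2 := J2) i R _ j hj).trans
      ((((b j).congrA rfl (hW.1 j) (hW.2.1 j hj)).1).trans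
        (star_ppgObj_ne (J1 := J1) (J2 := J2) i R v j hj).symm)
  case reflect2 =>
    intro i R B' v j hj
    have hcmp : HEq ((Bsp i).comp v ((SymLens.star k Bsp b J1 J2).amend i R v))
        ((Bsp i).comp v ((b i).amendB (R.rho i) v)) :=
      (Bsp i).comp_congr rfl rfl (star_ppgObj_eq (J1 := J1) (J2 := J2) i R v) HEq.rfl
        (star_amend_heq (J1 := J1) (J2 := J2) i R v)
    have h1 := (b i).congrB rfl (star_ppgObj_eq (J1 := J1) (J2 := J2) i R v) hcmp
    have hW := starW_congr i R
      (h1.1.trans ((hb i).wb_refl2BA_obj (R.rho i) v))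
      (h1.2.1.trans ((hb i).wb_refl2BA (R.rho i) v))
    exact (star_ppg_heq (J1 := J1) (J2 := J2) i R _ j hj).trans
      ((((b j).congrA rfl (hW.1 j) (hW.2.1 j hj)).2.1).trans
        (star_ppg_heq (J1 := J1) (J2 := J2) i R v j hj).symm)
  case reflect3_obj =>
    intro i R B' v
    have hcmp : HEq ((Bsp i).comp v ((SymLens.star k Bsp b J1 J2).amend i R v))
        ((Bsp i).comp v ((b i).amendB (R.rho i) v)) :=
      (Bsp i).comp_congr rfl rfl (star_ppgObj_eq (J1 := J1) (J2 := J2) i R v) HEq.rfl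
        (star_amend_heq (J1 := J1) (J2 := J2) i R v)
    have h1 := (b i).congrB rfl (star_ppgObj_eq (J1 := J1) (J2 := J2) i R v) hcmp
    exact (star_ppgObj_eq (J1 := J1) (J2 := J2) i R _).trans
      ((h1.2.2.1.trans ((hb i).wb_refl3B_obj (R.rho i) v)).trans
        (star_ppgObj_eq (J1 := J1) (J2 := J2) i R v).symm)
  case reflect3 =>
    intro i R B' v
    have hcmp : HEq ((Bsp i).comp v ((SymLens.star k Bsp b J1 J2).amend i R v))
        ((Bsp i).comp v ((b i).amendB (R.rho i) v)) :=
      (Bsp i).comp_congr rfl rfl (star_ppgObj_eq (J1 := J1) (J2 := J2) i R v) HEq.rfl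
        (star_amend_heq (J1 := J1) (J2 := J2) i R v)
    have h1 := (b i).congrB rfl (star_ppgObj_eq (J1 := J1) (J2 := J2) i R v) hcmp
    exact (star_amend_heq (J1 := J1) (J2 := J2) i R _).trans
      ((h1.2.2.2.1.trans ((hb i).wb_refl3B (R.rho i) v)).trans
        ((Bsp i).id_heq (star_ppgObj_eq (J1 := J1) (J2 := J2) i R v).symm))

theorem star_kpp (hk : k.VeryWellBehaved) (hb : ∀ i, (b i).VeryWellBehaved)
    (hA : ∀ i, (k.Sp i).WellBehaved)
    (i : ι) (R : StarCorr k Bsp b) {B1 B2 : (Bsp i).Obj}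
    (u : (Bsp i).Hom ((b i).bB (R.rho i)) B1) (v : (Bsp i).Hom B1 B2)
    (hK : (Bsp i).K u v) (hD : (Bsp i).D v ((SymLens.star k Bsp b J1 J2).amend i R u)) :
    (∀ (j : ι) (hj : j ≠ i),
      (SymLens.star k Bsp b J1 J2).ppgObj i R ((Bsp i).comp u v) j = (SymLens.star k Bsp b J1 J2).ppgObj i ((SymLens.star k Bsp b J1 J2).ppgCorr i R u) ((SymLens.star k Bsp b J1 J2).kppAux i R u v hD) j) ∧
    (∀ (j : ι) (hj : j ≠ i),
      HEq ((SymLens.star k Bsp b J1 J2).ppg i R ((Bsp i).comp u v) j hj)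
        ((Bsp j).comp ((SymLens.star k Bsp b J1 J2).ppg i R u j hj)
          ((Bsp j).castSrc ((SymLens.star k Bsp b J1 J2).ppgCorr_bdry i R u j)
            ((SymLens.star k Bsp b J1 J2).ppg i ((SymLens.star k Bsp b J1 J2).ppgCorr i R u) ((SymLens.star k Bsp b J1 J2).kppAux i R u v hD) j hj)))) ∧
    (∀ (j : ι) (hj : j ≠ i),
      (Bsp j).K ((SymLens.star k Bsp b J1 J2).ppg i R u j hj)
        ((Bsp j).castSrc ((SymLens.star k Bsp b J1 J2).ppgCorr_bdry i R u j)
          ((SymLens.star k Bsp b J1 J2).ppg i ((SymLens.star k Bsp b J1 J2).ppgCorr i R u) ((SymLens.star k Bsp b J1 J2).kppAux i R u v hD) j hj))) ∧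
    ((SymLens.star k Bsp b J1 J2).ppgObj i R ((Bsp i).comp u v) i = (SymLens.star k Bsp b J1 J2).ppgObj i ((SymLens.star k Bsp b J1 J2).ppgCorr i R u) ((SymLens.star k Bsp b J1 J2).kppAux i R u v hD) i) ∧
    HEq ((SymLens.star k Bsp b J1 J2).amend i R ((Bsp i).comp u v))
      ((Bsp i).comp ((Bsp i).merge1 v ((SymLens.star k Bsp b J1 J2).amend i R u) hD)
        ((SymLens.star k Bsp b J1 J2).amend i ((SymLens.star k Bsp b J1 J2).ppgCorr i R u) ((SymLens.star k Bsp b J1 J2).kppAux i R u v hD))) := by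
  have hsaObj : (SymLens.star k Bsp b J1 J2).ppgObj i R u i = (b i).amendBObj (R.rho i) u := star_ppgObj_eq (J1 := J1) (J2 := J2) i R u
  have hsa : HEq ((SymLens.star k Bsp b J1 J2).amend i R u) ((b i).amendB (R.rho i) u) := star_amend_heq (J1 := J1) (J2 := J2) i R u
  have hD' : (Bsp i).D v ((b i).amendB (R.rho i) u) :=
    ((Bsp i).D_congr rfl rfl hsaObj HEq.rfl hsa).mp hD
  have hMrg := (Bsp i).merge_congr rfl rfl hsaObj HEq.rfl hsa hD hD'
  have hvt : HEq ((SymLens.star k Bsp b J1 J2).kppAux i R u v hD) ((Bsp i).merge2 v ((SymLens.star k Bsp b J1 J2).amend i R u) hD) :=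
    (Bsp i).castSrc_heq _ _
  have hvb : HEq ((b i).toSym.kppAux false (R.rho i) u v hD') ((Bsp i).merge2 v ((b i).amendB (R.rho i) u) hD') :=
    (Bsp i).castSrc_heq _ _
  have hvv : HEq ((SymLens.star k Bsp b J1 J2).kppAux i R u v hD) ((b i).toSym.kppAux false (R.rho i) u v hD') := hvt.trans (hMrg.2.2.trans hvb.symm)
  have hrho : ((SymLens.star k Bsp b J1 J2).ppgCorr i R u).rho i = (b i).ppgBACorr (R.rho i) u :=
    star_ppgCorr_rho_eq (J1 := J1) (J2 := J2) i R u
  -- the b i level K-Putput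
  have e1 : (b i).ppgBAObj (R.rho i) ((Bsp i).comp u v) = (b i).ppgBAObj ((b i).ppgBACorr (R.rho i) u) ((b i).toSym.kppAux false (R.rho i) u v hD') :=
    (hb i).kpp_obj false (R.rho i) u v hK hD' true (by simp)
  have e2 : HEq ((b i).ppgBA (R.rho i) ((Bsp i).comp u v)) ((k.Sp i).comp ((b i).ppgBA (R.rho i) u) ((k.Sp i).castSrc ((b i).ppgBACorr_bA (R.rho i) u) ((b i).ppgBA ((b i).ppgBACorr (R.rho i) u) ((b i).toSym.kppAux false (R.rho i) u v hD')))) :=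
    (hb i).kpp_ppg false (R.rho i) u v hK hD' true (by simp)
  have e3 : (k.Sp i).K ((b i).ppgBA (R.rho i) u) ((k.Sp i).castSrc ((b i).ppgBACorr_bA (R.rho i) u) ((b i).ppgBA ((b i).ppgBACorr (R.rho i) u) ((b i).toSym.kppAux false (R.rho i) u v hD'))) :=
    (hb i).kpp_K false (R.rho i) u v hK hD' true (by simp)
  have e4 : (b i).amendBObj (R.rho i) ((Bsp i).comp u v) = (b i).amendBObj ((b i).ppgBACorr (R.rho i) u) ((b i).toSym.kppAux false (R.rho i) u v hD') :=
    (hb i).kpp_amend_obj false (R.rho i) u v hK hD'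
  have e5 : HEq ((b i).amendB (R.rho i) ((Bsp i).comp u v))
      ((Bsp i).comp ((Bsp i).merge1 v ((b i).amendB (R.rho i) u) hD') ((b i).amendB ((b i).ppgBACorr (R.rho i) u) ((b i).toSym.kppAux false (R.rho i) u v hD'))) :=
    (hb i).kpp_amend false (R.rho i) u v hK hD'
  -- lifting to the k level
  have hUuv : HEq (starU k Bsp b R i ((Bsp i).comp u v)) ((k.Sp i).comp (starU k Bsp b R i u) ((k.Sp i).castSrc ((b i).ppgBACorr_bA (R.rho i) u) ((b i).ppgBA ((b i).ppgBACorr (R.rho i) u) ((b i).toSym.kppAux false (R.rho i) u v hD')))) :=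
    ((k.Sp i).castSrc_heq _ _).trans (e2.trans
      ((k.Sp i).comp_congr (R.compat i) rfl rfl ((k.Sp i).castSrc_heq _ _).symm HEq.rfl))
  have hKk : (k.Sp i).K (starU k Bsp b R i u) ((k.Sp i).castSrc ((b i).ppgBACorr_bA (R.rho i) u) ((b i).ppgBA ((b i).ppgBACorr (R.rho i) u) ((b i).toSym.kppAux false (R.rho i) u v hD'))) :=
    ((k.Sp i).K_congr (R.compat i) rfl rfl ((k.Sp i).castSrc_heq _ _).symm HEq.rfl).mp e3
  have hJ11 : k.ppgObj i R.S (starU k Bsp b R i u) i = (b i).ppgBAObj (R.rho i) u :=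
    (J1 i (R.rho i) u R.S (R.compat i).symm).1
  have hJ12 : HEq (k.amend i R.S (starU k Bsp b R i u)) ((k.Sp i).id ((b i).ppgBAObj (R.rho i) u)) :=
    (J1 i (R.rho i) u R.S (R.compat i).symm).2
  obtain ⟨hDk, hMobj, hM1, hM2⟩ := (k.Sp i).mergeId' (hA i) hJ11 (k.amend i R.S (starU k Bsp b R i u)) hJ12 ((k.Sp i).castSrc ((b i).ppgBACorr_bA (R.rho i) u) ((b i).ppgBA ((b i).ppgBACorr (R.rho i) u) ((b i).toSym.kppAux false (R.rho i) u v hD')))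
  have hxt : HEq (k.kppAux i R.S (starU k Bsp b R i u) ((k.Sp i).castSrc ((b i).ppgBACorr_bA (R.rho i) u) ((b i).ppgBA ((b i).ppgBACorr (R.rho i) u) ((b i).toSym.kppAux false (R.rho i) u v hD'))) hDk) ((k.Sp i).castSrc ((b i).ppgBACorr_bA (R.rho i) u) ((b i).ppgBA ((b i).ppgBACorr (R.rho i) u) ((b i).toSym.kppAux false (R.rho i) u v hD'))) := ((k.Sp i).castSrc_heq _ _).trans hM2
  have f1 := hk.kpp_obj i R.S (starU k Bsp b R i u) ((k.Sp i).castSrc ((b i).ppgBACorr_bA (R.rho i) u) ((b i).ppgBA ((b i).ppgBACorr (R.rho i) u) ((b i).toSym.kppAux false (R.rho i) u v hD'))) hKk hDk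
  have f2 := hk.kpp_ppg i R.S (starU k Bsp b R i u) ((k.Sp i).castSrc ((b i).ppgBACorr_bA (R.rho i) u) ((b i).ppgBA ((b i).ppgBACorr (R.rho i) u) ((b i).toSym.kppAux false (R.rho i) u v hD'))) hKk hDk
  have f3 := hk.kpp_K i R.S (starU k Bsp b R i u) ((k.Sp i).castSrc ((b i).ppgBACorr_bA (R.rho i) u) ((b i).ppgBA ((b i).ppgBACorr (R.rho i) u) ((b i).toSym.kppAux false (R.rho i) u v hD'))) hKk hDk
  obtain ⟨g1, g2, g3, g4, g5⟩ := (b i).congrB hrho hMrg.1 hvv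
  have hU' : HEq (starU k Bsp b ((SymLens.star k Bsp b J1 J2).ppgCorr i R u) i ((SymLens.star k Bsp b J1 J2).kppAux i R u v hD)) (k.kppAux i R.S (starU k Bsp b R i u) ((k.Sp i).castSrc ((b i).ppgBACorr_bA (R.rho i) u) ((b i).ppgBA ((b i).ppgBACorr (R.rho i) u) ((b i).toSym.kppAux false (R.rho i) u v hD'))) hDk) :=
    ((k.Sp i).castSrc_heq _ _).trans (g2.trans (((k.Sp i).castSrc_heq _ _).symm.trans hxt.symm))
  have hU'obj : (b i).ppgBAObj (((SymLens.star k Bsp b J1 J2).ppgCorr i R u).rho i) ((SymLens.star k Bsp b J1 J2).kppAux i R u v hD)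
      = (k.Sp i).mergeObj ((k.Sp i).castSrc ((b i).ppgBACorr_bA (R.rho i) u) ((b i).ppgBA ((b i).ppgBACorr (R.rho i) u) ((b i).toSym.kppAux false (R.rho i) u v hD'))) (k.amend i R.S (starU k Bsp b R i u)) hDk := g1.trans hMobj.symm
  have c1 : ∀ j, k.ppgObj i (k.ppgCorr i R.S (starU k Bsp b R i u)) (starU k Bsp b ((SymLens.star k Bsp b J1 J2).ppgCorr i R u) i ((SymLens.star k Bsp b J1 J2).kppAux i R u v hD)) j
      = k.ppgObj i (k.ppgCorr i R.S (starU k Bsp b R i u)) (k.kppAux i R.S (starU k Bsp b R i u) ((k.Sp i).castSrc ((b i).ppgBACorr_bA (R.rho i) u) ((b i).ppgBA ((b i).ppgBACorr (R.rho i) u) ((b i).toSym.kppAux false (R.rho i) u v hD'))) hDk) j :=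
    fun j => k.congr_ppgObj i rfl hU'obj hU' j
  have c2 : ∀ j (hj : j ≠ i),
      HEq (k.ppg i (k.ppgCorr i R.S (starU k Bsp b R i u)) (starU k Bsp b ((SymLens.star k Bsp b J1 J2).ppgCorr i R u) i ((SymLens.star k Bsp b J1 J2).kppAux i R u v hD)) j hj)
        (k.ppg i (k.ppgCorr i R.S (starU k Bsp b R i u)) (k.kppAux i R.S (starU k Bsp b R i u) ((k.Sp i).castSrc ((b i).ppgBACorr_bA (R.rho i) u) ((b i).ppgBA ((b i).ppgBACorr (R.rho i) u) ((b i).toSym.kppAux false (R.rho i) u v hD'))) hDk) j hj) :=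
    fun j hj => k.congr_ppg i rfl hU'obj hU' j hj
  have hUuvObj : ∀ j, k.ppgObj i R.S (starU k Bsp b R i ((Bsp i).comp u v)) j
      = k.ppgObj i R.S ((k.Sp i).comp (starU k Bsp b R i u) ((k.Sp i).castSrc ((b i).ppgBACorr_bA (R.rho i) u) ((b i).ppgBA ((b i).ppgBACorr (R.rho i) u) ((b i).toSym.kppAux false (R.rho i) u v hD')))) j :=
    fun j => k.congr_ppgObj i rfl e1 hUuv j
  have key : ∀ (j : ι) (hj : j ≠ i),
      ((SymLens.star k Bsp b J1 J2).ppgObj i R ((Bsp i).comp u v) j = (SymLens.star k Bsp b J1 J2).ppgObj i ((SymLens.star k Bsp b J1 J2).ppgCorr i R u) ((SymLens.star k Bsp b J1 J2).kppAux i R u v hD) j) ∧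
      HEq ((SymLens.star k Bsp b J1 J2).ppg i R ((Bsp i).comp u v) j hj)
        ((Bsp j).comp ((SymLens.star k Bsp b J1 J2).ppg i R u j hj)
          ((Bsp j).castSrc ((SymLens.star k Bsp b J1 J2).ppgCorr_bdry i R u j)
            ((SymLens.star k Bsp b J1 J2).ppg i ((SymLens.star k Bsp b J1 J2).ppgCorr i R u) ((SymLens.star k Bsp b J1 J2).kppAux i R u v hD) j hj))) ∧
      (Bsp j).K ((SymLens.star k Bsp b J1 J2).ppg i R u j hj)
        ((Bsp j).castSrc ((SymLens.star k Bsp b J1 J2).ppgCorr_bdry i R u j)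
          ((SymLens.star k Bsp b J1 J2).ppg i ((SymLens.star k Bsp b J1 J2).ppgCorr i R u) ((SymLens.star k Bsp b J1 J2).kppAux i R u v hD) j hj)) := by
    intro j hj
    have hWuv : HEq (starW k Bsp b R i ((Bsp i).comp u v) j hj) ((k.Sp j).comp (starW k Bsp b R i u j hj) ((k.Sp j).castSrc (k.ppgCorr_bdry i R.S (starU k Bsp b R i u) j) (k.ppg i (k.ppgCorr i R.S (starU k Bsp b R i u)) (k.kppAux i R.S (starU k Bsp b R i u) ((k.Sp i).castSrc ((b i).ppgBACorr_bA (R.rho i) u) ((b i).ppgBA ((b i).ppgBACorr (R.rho i) u) ((b i).toSym.kppAux false (R.rho i) u v hD'))) hDk) j hj))) :=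
      ((k.Sp j).castSrc_heq _ _).trans
        (((k.congr_ppg i rfl e1 hUuv j hj).trans (f2 j hj)).trans
          ((k.Sp j).comp_congr (R.compat j).symm rfl rfl ((k.Sp j).castSrc_heq _ _).symm HEq.rfl))
    have hKj : (k.Sp j).K (starW k Bsp b R i u j hj) ((k.Sp j).castSrc (k.ppgCorr_bdry i R.S (starU k Bsp b R i u) j) (k.ppg i (k.ppgCorr i R.S (starU k Bsp b R i u)) (k.kppAux i R.S (starU k Bsp b R i u) ((k.Sp i).castSrc ((b i).ppgBACorr_bA (R.rho i) u) ((b i).ppgBA ((b i).ppgBACorr (R.rho i) u) ((b i).toSym.kppAux false (R.rho i) u v hD'))) hDk) j hj)) :=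
      ((k.Sp j).K_congr (R.compat j).symm rfl rfl ((k.Sp j).castSrc_heq _ _).symm HEq.rfl).mp (f3 j hj)
    have hJ21 : (b j).amendAObj (R.rho j) (starW k Bsp b R i u j hj) = k.ppgObj i R.S (starU k Bsp b R i u) j :=
      (J2 i j hj R.S (starU k Bsp b R i u) (R.rho j) (R.compat j)).1
    have hJ22 : HEq ((b j).amendA (R.rho j) (starW k Bsp b R i u j hj)) ((k.Sp j).id (k.ppgObj i R.S (starU k Bsp b R i u) j)) :=
      (J2 i j hj R.S (starU k Bsp b R i u) (R.rho j) (R.compat j)).2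
    obtain ⟨hDj, mObj, m1, m2⟩ := (k.Sp j).mergeId' (hA j) hJ21 ((b j).amendA (R.rho j) (starW k Bsp b R i u j hj)) hJ22 ((k.Sp j).castSrc (k.ppgCorr_bdry i R.S (starU k Bsp b R i u) j) (k.ppg i (k.ppgCorr i R.S (starU k Bsp b R i u)) (k.kppAux i R.S (starU k Bsp b R i u) ((k.Sp i).castSrc ((b i).ppgBACorr_bA (R.rho i) u) ((b i).ppgBA ((b i).ppgBACorr (R.rho i) u) ((b i).toSym.kppAux false (R.rho i) u v hD'))) hDk) j hj))
    have q1 : (b j).ppgABObj (R.rho j) ((k.Sp j).comp (starW k Bsp b R i u j hj) ((k.Sp j).castSrc (k.ppgCorr_bdry i R.S (starU k Bsp b R i u) j) (k.ppg i (k.ppgCorr i R.S (starU k Bsp b R i u)) (k.kppAux i R.S (starU k Bsp b R i u) ((k.Sp i).castSrc ((b i).ppgBACorr_bA (R.rho i) u) ((b i).ppgBA ((b i).ppgBACorr (R.rho i) u) ((b i).toSym.kppAux false (R.rho i) u v hD'))) hDk) j hj))) = (b j).ppgABObj ((b j).ppgABCorr (R.rho j) (starW k Bsp b R i u j hj)) ((b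 j).toSym.kppAux true (R.rho j) (starW k Bsp b R i u j hj) ((k.Sp j).castSrc (k.ppgCorr_bdry i R.S (starU k Bsp b R i u) j) (k.ppg i (k.ppgCorr i R.S (starU k Bsp b R i u)) (k.kppAux i R.S (starU k Bsp b R i u) ((k.Sp i).castSrc ((b i).ppgBACorr_bA (R.rho i) u) ((b i).ppgBA ((b i).ppgBACorr (R.rho i) u) ((b i).toSym.kppAux false (R.rho i) u v hD'))) hDk) j hj)) hDj) :=
      (hb j).kpp_obj true (R.rho j) (starW k Bsp b R i u j hj) ((k.Sp j).castSrc (k.ppgCorr_bdry i R.S (starU k Bsp b R i u) j) (k.ppg i (k.ppgCorr i R.S (starU k Bsp b R i u)) (k.kppAux i R.S (starU k Bsp b R i u) ((k.Sp i).castSrc ((b i).ppgBACorr_bA (R.rho i) u) ((b i).ppgBA ((b i).ppgBACorr (R.rho i) u) ((b i).toSym.kppAux false (R.rho i) u v hD'))) hDk) j hj)) hKj hDj false (by simp)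
    have q2 : HEq ((b j).ppgAB (R.rho j) ((k.Sp j).comp (starW k Bsp b R i u j hj) ((k.Sp j).castSrc (k.ppgCorr_bdry i R.S (starU k Bsp b R i u) j) (k.ppg i (k.ppgCorr i R.S (starU k Bsp b R i u)) (k.kppAux i R.S (starU k Bsp b R i u) ((k.Sp i).castSrc ((b i).ppgBACorr_bA (R.rho i) u) ((b i).ppgBA ((b i).ppgBACorr (R.rho i) u) ((b i).toSym.kppAux false (R.rho i) u v hD'))) hDk) j hj))))
        ((Bsp j).comp ((b j).ppgAB (R.rho j) (starW k Bsp b R i u j hj))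
          ((Bsp j).castSrc ((b j).ppgABCorr_bB (R.rho j) (starW k Bsp b R i u j hj)) ((b j).ppgAB ((b j).ppgABCorr (R.rho j) (starW k Bsp b R i u j hj)) ((b j).toSym.kppAux true (R.rho j) (starW k Bsp b R i u j hj) ((k.Sp j).castSrc (k.ppgCorr_bdry i R.S (starU k Bsp b R i u) j) (k.ppg i (k.ppgCorr i R.S (starU k Bsp b R i u)) (k.kppAux i R.S (starU k Bsp b R i u) ((k.Sp i).castSrc ((b i).ppgBACorr_bA (R.rho i) u) ((b i).ppgBA ((b i).ppgBACorr (R.rho i) u) ((b i).toSym.kppAux false (R.rho i) u v hD'))) hDk) j hj)) hDj)))) :=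
      (hb j).kpp_ppg true (R.rho j) (starW k Bsp b R i u j hj) ((k.Sp j).castSrc (k.ppgCorr_bdry i R.S (starU k Bsp b R i u) j) (k.ppg i (k.ppgCorr i R.S (starU k Bsp b R i u)) (k.kppAux i R.S (starU k Bsp b R i u) ((k.Sp i).castSrc ((b i).ppgBACorr_bA (R.rho i) u) ((b i).ppgBA ((b i).ppgBACorr (R.rho i) u) ((b i).toSym.kppAux false (R.rho i) u v hD'))) hDk) j hj)) hKj hDj false (by simp)
    have q3 : (Bsp j).K ((b j).ppgAB (R.rho j) (starW k Bsp b R i u j hj))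
        ((Bsp j).castSrc ((b j).ppgABCorr_bB (R.rho j) (starW k Bsp b R i u j hj)) ((b j).ppgAB ((b j).ppgABCorr (R.rho j) (starW k Bsp b R i u j hj)) ((b j).toSym.kppAux true (R.rho j) (starW k Bsp b R i u j hj) ((k.Sp j).castSrc (k.ppgCorr_bdry i R.S (starU k Bsp b R i u) j) (k.ppg i (k.ppgCorr i R.S (starU k Bsp b R i u)) (k.kppAux i R.S (starU k Bsp b R i u) ((k.Sp i).castSrc ((b i).ppgBACorr_bA (R.rho i) u) ((b i).ppgBA ((b i).ppgBACorr (R.rho i) u) ((b i).toSym.kppAux false (R.rho i) u v hD'))) hDk) j hj)) hDj))) :=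
      (hb j).kpp_K true (R.rho j) (starW k Bsp b R i u j hj) ((k.Sp j).castSrc (k.ppgCorr_bdry i R.S (starU k Bsp b R i u) j) (k.ppg i (k.ppgCorr i R.S (starU k Bsp b R i u)) (k.kppAux i R.S (starU k Bsp b R i u) ((k.Sp i).castSrc ((b i).ppgBACorr_bA (R.rho i) u) ((b i).ppgBA ((b i).ppgBACorr (R.rho i) u) ((b i).toSym.kppAux false (R.rho i) u v hD'))) hDk) j hj)) hKj hDj false (by simp)
    have hyy : HEq ((b j).toSym.kppAux true (R.rho j) (starW k Bsp b R i u j hj) ((k.Sp j).castSrc (k.ppgCorr_bdry i R.S (starU k Bsp b R i u) j) (k.ppg i (k.ppgCorr i R.S (starU k Bsp b R i u)) (k.kppAux i R.S (starU k Bsp b R i u) ((k.Sp i).castSrc ((b i).ppgBACorr_bA (R.rho i) u) ((b i).ppgBA ((b i).ppgBACorr (R.rho i) u) ((b i).toSym.kppAux false (R.rho i) u v hD'))) hDk) j hj)) hDj) ((k.Sp j).castSrc (k.ppgCorr_bdry i R.S (starU k Bsp b R i u) j) (k.ppg i (k.ppgCorr i R.S (starU k Bsp b R i u)) (k.kppAux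 i R.S (starU k Bsp b R i u) ((k.Sp i).castSrc ((b i).ppgBACorr_bA (R.rho i) u) ((b i).ppgBA ((b i).ppgBACorr (R.rho i) u) ((b i).toSym.kppAux false (R.rho i) u v hD'))) hDk) j hj)) := ((k.Sp j).castSrc_heq _ _).trans m2
    have hrhoj : ((SymLens.star k Bsp b J1 J2).ppgCorr i R u).rho j = ((b j).ppgABCorr (R.rho j) (starW k Bsp b R i u j hj)) := star_ppgCorr_rho_ne (J1 := J1) (J2 := J2) i R u j hj
    have hW' : HEq (starW k Bsp b ((SymLens.star k Bsp b J1 J2).ppgCorr i R u) i ((SymLens.star k Bsp b J1 J2).kppAux i R u v hD) j hj) ((b j).toSym.kppAux true (R.rho j) (starW k Bsp b R i u j hj) ((k.Sp j).castSrc (k.ppgCorr_bdry i R.S (starU k Bsp b R i u) j) (k.ppg i (k.ppgCorr i R.S (starU k Bsp b R i u)) (k.kppAux i R.S (starU k Bsp b R i u) ((k.Sp i).castSrc ((b i).ppgBACorr_bA (R.rho i) u) ((b i).ppgBA ((b i).ppgBACorr (R.rho i) u) ((b i).toSym.kppAux false (R.rho i) u v hD'))) hDk) j hj)) hDj) :=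
      ((k.Sp j).castSrc_heq _ _).trans ((c2 j hj).trans
        (((k.Sp j).castSrc_heq _ _).symm.trans hyy.symm))
    have hW'obj : k.ppgObj i (k.ppgCorr i R.S (starU k Bsp b R i u)) (starU k Bsp b ((SymLens.star k Bsp b J1 J2).ppgCorr i R u) i ((SymLens.star k Bsp b J1 J2).kppAux i R u v hD)) j
        = (k.Sp j).mergeObj ((k.Sp j).castSrc (k.ppgCorr_bdry i R.S (starU k Bsp b R i u) j) (k.ppg i (k.ppgCorr i R.S (starU k Bsp b R i u)) (k.kppAux i R.S (starU k Bsp b R i u) ((k.Sp i).castSrc ((b i).ppgBACorr_bA (R.rho i) u) ((b i).ppgBA ((b i).ppgBACorr (R.rho i) u) ((b i).toSym.kppAux false (R.rho i) u v hD'))) hDk) j hj)) ((b j).amendA (R.rho j) (starW k Bsp b R i u j hj)) hDj := (c1 j).trans mObj.symm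
    have hTTj : k.ppgObj i R.S (starU k Bsp b R i ((Bsp i).comp u v)) j
        = k.ppgObj i (k.ppgCorr i R.S (starU k Bsp b R i u)) (k.kppAux i R.S (starU k Bsp b R i u) ((k.Sp i).castSrc ((b i).ppgBACorr_bA (R.rho i) u) ((b i).ppgBA ((b i).ppgBACorr (R.rho i) u) ((b i).toSym.kppAux false (R.rho i) u v hD'))) hDk) j := (hUuvObj j).trans (f1 j hj)
    obtain ⟨d1, d2, d3, d4, d5⟩ := (b j).congrA (R := R.rho j) rfl hTTj hWuv
    obtain ⟨p1, p2, p3, p4, p5⟩ := (b j).congrA hrhoj.symm hW'obj.symm hW'.symm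
    have hgj : HEq ((Bsp j).castSrc ((b j).ppgABCorr_bB (R.rho j) (starW k Bsp b R i u j hj)) ((b j).ppgAB ((b j).ppgABCorr (R.rho j) (starW k Bsp b R i u j hj)) ((b j).toSym.kppAux true (R.rho j) (starW k Bsp b R i u j hj) ((k.Sp j).castSrc (k.ppgCorr_bdry i R.S (starU k Bsp b R i u) j) (k.ppg i (k.ppgCorr i R.S (starU k Bsp b R i u)) (k.kppAux i R.S (starU k Bsp b R i u) ((k.Sp i).castSrc ((b i).ppgBACorr_bA (R.rho i) u) ((b i).ppgBA ((b i).ppgBACorr (R.rho i) u) ((b i).toSym.kppAux false (R.rho i) u v hD'))) hDk) j hj)) hDj)))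
        ((Bsp j).castSrc ((SymLens.star k Bsp b J1 J2).ppgCorr_bdry i R u j)
          ((SymLens.star k Bsp b J1 J2).ppg i ((SymLens.star k Bsp b J1 J2).ppgCorr i R u) ((SymLens.star k Bsp b J1 J2).kppAux i R u v hD) j hj)) :=
      ((Bsp j).castSrc_heq _ _).trans (p2.trans
        ((star_ppg_heq (J1 := J1) (J2 := J2) i ((SymLens.star k Bsp b J1 J2).ppgCorr i R u) ((SymLens.star k Bsp b J1 J2).kppAux i R u v hD) j hj).symm.trans
          ((Bsp j).castSrc_heq _ _).symm))
    refine ⟨?_, ?_, ?_⟩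
    · exact (star_ppgObj_ne (J1 := J1) (J2 := J2) i R _ j hj).trans ((d1.trans (q1.trans p1)).trans
        (star_ppgObj_ne (J1 := J1) (J2 := J2) i ((SymLens.star k Bsp b J1 J2).ppgCorr i R u) ((SymLens.star k Bsp b J1 J2).kppAux i R u v hD) j hj).symm)
    · have hcc := (Bsp j).comp_congr rfl (star_ppgObj_ne (J1 := J1) (J2 := J2) i R u j hj).symm
        (p1.trans (star_ppgObj_ne (J1 := J1) (J2 := J2) i ((SymLens.star k Bsp b J1 J2).ppgCorr i R u) ((SymLens.star k Bsp b J1 J2).kppAux i R u v hD) j hj).symm)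
        (star_ppg_heq (J1 := J1) (J2 := J2) i R u j hj).symm hgj
      exact (star_ppg_heq (J1 := J1) (J2 := J2) i R _ j hj).trans ((d2.trans q2).trans hcc)
    · exact ((Bsp j).K_congr rfl (star_ppgObj_ne (J1 := J1) (J2 := J2) i R u j hj).symm
        (p1.trans (star_ppgObj_ne (J1 := J1) (J2 := J2) i ((SymLens.star k Bsp b J1 J2).ppgCorr i R u) ((SymLens.star k Bsp b J1 J2).kppAux i R u v hD) j hj).symm)
        (star_ppg_heq (J1 := J1) (J2 := J2) i R u j hj).symm hgj).mp q3
  refine ⟨fun j hj => (key j hj).1, fun j hj => (key j hj).2.1, fun j hj => (key j hj).2.2, ?_, ?_⟩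
  · exact (star_ppgObj_eq (J1 := J1) (J2 := J2) i R _).trans ((e4.trans g3.symm).trans
      (star_ppgObj_eq (J1 := J1) (J2 := J2) i ((SymLens.star k Bsp b J1 J2).ppgCorr i R u) ((SymLens.star k Bsp b J1 J2).kppAux i R u v hD)).symm)
  · refine (star_amend_heq (J1 := J1) (J2 := J2) i R _).trans (e5.trans ?_)
    exact (Bsp i).comp_congr rfl hMrg.1.symm
      ((g3.symm).trans (star_ppgObj_eq (J1 := J1) (J2 := J2) i ((SymLens.star k Bsp b J1 J2).ppgCorr i R u) ((SymLens.star k Bsp b J1 J2).kppAux i R u v hD)).symm)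
      hMrg.2.1.symm
      ((g4.symm).trans (star_amend_heq (J1 := J1) (J2 := J2) i ((SymLens.star k Bsp b J1 J2).ppgCorr i R u) ((SymLens.star k Bsp b J1 J2).kppAux i R u v hD)).symm)

theorem star_vwb (hA : ∀ i, (k.Sp i).WellBehaved) (hk : k.VeryWellBehaved)
    (hb : ∀ i, (b i).VeryWellBehaved) :
    (SymLens.star k Bsp b J1 J2).VeryWellBehaved where
  toWellBehaved := star_wb hk.toWellBehaved (fun i => (hb i).toWellBehaved)
  kpp_obj := fun i R _ _ u v hK hD j hj => (star_kpp hk hb hA i R u v hK hD).1 j hj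
  kpp_ppg := fun i R _ _ u v hK hD j hj => (star_kpp hk hb hA i R u v hK hD).2.1 j hj
  kpp_K := fun i R _ _ u v hK hD j hj => (star_kpp hk hb hA i R u v hK hD).2.2.1 j hj
  kpp_amend_obj := fun i R _ _ u v hK hD => (star_kpp hk hb hA i R u v hK hD).2.2.2.1
  kpp_amend := fun i R _ _ u v hK hD => (star_kpp hk hb hA i R u v hK hD).2.2.2.2

end StarLemmas
end Star
/-- Star composition preserves (very) well-behavedness: over
well-behaved model spaces and under the junction conditions, if the central lens
and all peripheral binary lenses are (very) well-behaved, so is the composition. -/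
theorem stmt11 {ι : Type} [DecidableEq ι] (k : SymLens ι) (Bsp : ι → ModelSpace)
    (b : ∀ i, BLens (Bsp i) (k.Sp i))
    (J1 : ∀ (i : ι) (R : (b i).Corr) {B' : (Bsp i).Obj}
      (u : (Bsp i).Hom ((b i).bB R) B'), k.ClosedUpd i ((b i).ppgBA R u))
    (J2 : ∀ (i j : ι) (hj : j ≠ i) (S : k.Corr) {A' : (k.Sp i).Obj}
      (u : (k.Sp i).Hom (k.bdry i S) A'), (b j).ClosedA (k.ppg i S u j hj))
    (hB : ∀ i, (Bsp i).WellBehaved) (hA : ∀ i, (k.Sp i).WellBehaved) :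
    ((k.WellBehaved ∧ ∀ i, (b i).WellBehaved) →
      (SymLens.star k Bsp b J1 J2).WellBehaved) ∧
    ((k.VeryWellBehaved ∧ ∀ i, (b i).VeryWellBehaved) →
      (SymLens.star k Bsp b J1 J2).VeryWellBehaved) := by
  constructor
  · rintro ⟨hk, hb⟩
    exact star_wb hk hb
  · rintro ⟨hk, hb⟩
    exact star_vwb hA hk hb
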